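/- For every ε > 0 there exists a constant C_ε > 0 such that for every squarefree positive integer N and every function f : (ℤ/Nℤ)² → ℂ whose Fourier transform f̂ is supported in the parabola Σ = {(t, t²) : t ∈ ℤ/Nℤ}, one has ( (1/N²) · Σ_{x∈(ℤ/Nℤ)²} |f(x)|² )^{1/2} ≤ (C_ε · N^{ε})² · (1/N²) · Σ_{x∈(ℤ/Nℤ)²} |f(x)|. -/

import Mathlib

open scoped BigOperators

/-- Normalized Fourier transform on `(ℤ/Nℤ)²`:
`f̂(m) = N⁻¹ ∑ₓ f(x) e^{-2πi (x·m)/N}` where `x·m = x₁m₁ + x₂m₂`. -/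
noncomputable def dft (N : ℕ) [NeZero N] (f : ZMod N × ZMod N → ℂ)
    (m : ZMod N × ZMod N) : ℂ :=
  (N : ℂ)⁻¹ * ∑ x : ZMod N × ZMod N,
    f x * Complex.exp (-2 * Real.pi * Complex.I *
      (((x.1 * m.1 + x.2 * m.2).val : ℕ) : ℂ) / (N : ℂ))

/-- The parabola `Σ = {(t, t²) : t ∈ ℤ/Nℤ}` in `(ℤ/Nℤ)²`. -/
def parabola (N : ℕ) [NeZero N] : Finset (ZMod N × ZMod N) :=
  Finset.univ.image (fun t : ZMod N => (t, t ^ 2))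

open Finset

variable {N : ℕ} [NeZero N]

lemma sum_psi (b : ZMod N) :
    ∑ x : ZMod N, ZMod.stdAddChar (x * b) = if b = 0 then (N : ℂ) else 0 := by
  simpa [ZMod.card] using AddChar.sum_mulShift b (ZMod.isPrimitive_stdAddChar N)

lemma sum_psi2 (b : ZMod N × ZMod N) :
    ∑ x : ZMod N × ZMod N, ZMod.stdAddChar (x.1 * b.1 + x.2 * b.2)
      = if b = 0 then ((N : ℂ)) ^ 2 else 0 := by
  rw [Fintype.sum_prod_type]
  simp_rw [AddChar.map_add_eq_mul]
  rw [← Finset.sum_mul_sum, sum_psi, sum_psi]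
  rcases eq_or_ne b.1 0 with h1 | h1 <;> rcases eq_or_ne b.2 0 with h2 | h2 <;>
    simp [Prod.ext_iff, h1, h2, sq]

lemma exp_eq_psi (a : ZMod N) :
    Complex.exp (-2 * Real.pi * Complex.I * ((a.val : ℕ) : ℂ) / (N : ℂ))
      = ZMod.stdAddChar (-a) := by
  have h := ZMod.stdAddChar_coe (N := N) (-(a.val : ℤ))
  have h2 : ((-(a.val : ℤ) : ℤ) : ZMod N) = -a := by
    push_cast
    simp [ZMod.natCast_val, ZMod.cast_id]
  rw [h2] at h
  rw [h]
  congr 1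
  push_cast
  ring

lemma dft_eq (f : ZMod N × ZMod N → ℂ) (m : ZMod N × ZMod N) :
    dft N f m = (N : ℂ)⁻¹ *
      ∑ x : ZMod N × ZMod N, f x * ZMod.stdAddChar (-(x.1 * m.1 + x.2 * m.2)) := by
  unfold dft
  congr 1
  exact Finset.sum_congr rfl fun x _ => by rw [exp_eq_psi]

lemma inversion (f : ZMod N × ZMod N → ℂ) (x : ZMod N × ZMod N) :
    f x = (N : ℂ)⁻¹ * ∑ m : ZMod N × ZMod N,
      dft N f m * ZMod.stdAddChar (x.1 * m.1 + x.2 * m.2) := by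
  symm
  have step1 : ∀ y m : ZMod N × ZMod N,
      f y * ZMod.stdAddChar (-(y.1 * m.1 + y.2 * m.2)) * ZMod.stdAddChar (x.1 * m.1 + x.2 * m.2)
        = f y * ZMod.stdAddChar (m.1 * (x.1 - y.1) + m.2 * (x.2 - y.2)) := by
    intro y m
    rw [mul_assoc, ← AddChar.map_add_eq_mul]
    congr 2
    ring
  have e1 : ∀ m : ZMod N × ZMod N,
      dft N f m * ZMod.stdAddChar (x.1 * m.1 + x.2 * m.2)
        = ∑ y : ZMod N × ZMod N, (N : ℂ)⁻¹ *
            (f y * ZMod.stdAddChar (m.1 * (x.1 - y.1) + m.2 * (x.2 - y.2))) := by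
    intro m
    rw [dft_eq, mul_assoc, Finset.sum_mul, Finset.mul_sum]
    exact Finset.sum_congr rfl fun y _ => by rw [step1]
  have e2 : ∑ m : ZMod N × ZMod N, dft N f m * ZMod.stdAddChar (x.1 * m.1 + x.2 * m.2)
      = ∑ y : ZMod N × ZMod N, (N : ℂ)⁻¹ *
          (f y * ∑ m : ZMod N × ZMod N,
            ZMod.stdAddChar (m.1 * (x.1 - y.1) + m.2 * (x.2 - y.2))) := by
    rw [Finset.sum_congr rfl fun m _ => e1 m, Finset.sum_comm]
    exact Finset.sum_congr rfl fun y _ => by rw [Finset.mul_sum, Finset.mul_sum]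
  have e3 : ∀ y : ZMod N × ZMod N, (N : ℂ)⁻¹ *
      (f y * ∑ m : ZMod N × ZMod N,
        ZMod.stdAddChar (m.1 * (x.1 - y.1) + m.2 * (x.2 - y.2)))
      = if x = y then (N : ℂ)⁻¹ * (f y * (N : ℂ) ^ 2) else 0 := by
    intro y
    rw [sum_psi2 (x.1 - y.1, x.2 - y.2)]
    by_cases h : x = y
    · subst h; simp
    · have hne : ((x.1 - y.1, x.2 - y.2) : ZMod N × ZMod N) ≠ 0 := by
        intro hc
        apply h
        rw [Prod.ext_iff] at hc ⊢
        obtain ⟨h1, h2⟩ := hc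
        exact ⟨sub_eq_zero.mp h1, sub_eq_zero.mp h2⟩
      simp [hne, h]
  rw [e2, Finset.sum_congr rfl fun y _ => e3 y, Finset.sum_ite_eq]
  have hN : (N : ℂ) ≠ 0 := Nat.cast_ne_zero.mpr (NeZero.ne N)
  simp only [Finset.mem_univ, if_true]
  have hh : (N : ℂ)⁻¹ * ((N : ℂ)⁻¹ * (f x * (N : ℂ) ^ 2))
      = ((N : ℂ)⁻¹ * (N : ℂ)) * ((N : ℂ)⁻¹ * (N : ℂ)) * f x := by ring
  rw [hh, inv_mul_cancel₀ hN, one_mul, one_mul]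

lemma psi_neg' (a : ZMod N) : ZMod.stdAddChar (-a) = (starRingEnd ℂ) (ZMod.stdAddChar a) := by
  rw [ZMod.stdAddChar_apply, ZMod.stdAddChar_apply, AddChar.map_neg_eq_inv,
    Circle.coe_inv_eq_conj]

lemma parseval_c (h : ZMod N × ZMod N → ℂ) :
    ∑ x : ZMod N × ZMod N,
      ((∑ m : ZMod N × ZMod N, h m * ZMod.stdAddChar (x.1 * m.1 + x.2 * m.2)) *
        (starRingEnd ℂ) (∑ m : ZMod N × ZMod N, h m * ZMod.stdAddChar (x.1 * m.1 + x.2 * m.2)))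
      = (N : ℂ) ^ 2 * ∑ m : ZMod N × ZMod N, h m * (starRingEnd ℂ) (h m) := by
  have e1 : ∀ x : ZMod N × ZMod N,
      (∑ m : ZMod N × ZMod N, h m * ZMod.stdAddChar (x.1 * m.1 + x.2 * m.2)) *
        (starRingEnd ℂ) (∑ m : ZMod N × ZMod N, h m * ZMod.stdAddChar (x.1 * m.1 + x.2 * m.2))
      = ∑ m : ZMod N × ZMod N, ∑ m' : ZMod N × ZMod N,
          h m * (starRingEnd ℂ) (h m') *
            ZMod.stdAddChar (x.1 * (m.1 - m'.1) + x.2 * (m.2 - m'.2)) := by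
    intro x
    rw [map_sum, Finset.sum_mul_sum]
    refine Finset.sum_congr rfl fun m _ => Finset.sum_congr rfl fun m' _ => ?_
    rw [map_mul, ← psi_neg', mul_mul_mul_comm, ← AddChar.map_add_eq_mul]
    congr 2
    ring
  rw [Finset.sum_congr rfl fun x _ => e1 x]
  rw [Finset.sum_comm]
  have e2 : ∀ m : ZMod N × ZMod N,
      ∑ x : ZMod N × ZMod N, ∑ m' : ZMod N × ZMod N,
        h m * (starRingEnd ℂ) (h m') *
          ZMod.stdAddChar (x.1 * (m.1 - m'.1) + x.2 * (m.2 - m'.2))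
      = (N : ℂ) ^ 2 * (h m * (starRingEnd ℂ) (h m)) := by
    intro m
    rw [Finset.sum_comm]
    have e3 : ∀ m' : ZMod N × ZMod N,
        ∑ x : ZMod N × ZMod N,
          h m * (starRingEnd ℂ) (h m') *
            ZMod.stdAddChar (x.1 * (m.1 - m'.1) + x.2 * (m.2 - m'.2))
        = if m = m' then (N : ℂ) ^ 2 * (h m * (starRingEnd ℂ) (h m')) else 0 := by
      intro m'
      rw [← Finset.mul_sum, sum_psi2 (m.1 - m'.1, m.2 - m'.2)]
      by_cases hmm : m = m'
      · subst hmm; simp [mul_comm]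
      · have hne : ((m.1 - m'.1, m.2 - m'.2) : ZMod N × ZMod N) ≠ 0 := by
          intro hc
          apply hmm
          rw [Prod.ext_iff] at hc ⊢
          exact ⟨sub_eq_zero.mp hc.1, sub_eq_zero.mp hc.2⟩
        simp [hne, hmm]
    rw [Finset.sum_congr rfl fun m' _ => e3 m', Finset.sum_ite_eq]
    simp
  rw [Finset.sum_congr rfl fun m _ => e2 m, ← Finset.mul_sum]

lemma parseval_abs (h : ZMod N × ZMod N → ℂ) :
    ∑ x : ZMod N × ZMod N,
      ‖∑ m : ZMod N × ZMod N, h m * ZMod.stdAddChar (x.1 * m.1 + x.2 * m.2)‖ ^ 2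
      = (N : ℝ) ^ 2 * ∑ m : ZMod N × ZMod N, ‖h m‖ ^ 2 := by
  apply Complex.ofReal_injective
  push_cast
  have key : ∀ z : ℂ, ((‖z‖ : ℝ) : ℂ) ^ 2 = z * (starRingEnd ℂ) z := by
    intro z
    rw [Complex.mul_conj]
    norm_cast
    exact Complex.sq_norm z
  simp_rw [key]
  exact parseval_c h

lemma sum_para {M : Type*} [AddCommMonoid M] (F : ZMod N × ZMod N → M)
    (h0 : ∀ m, m ∉ parabola N → F m = 0) :
    ∑ m : ZMod N × ZMod N, F m = ∑ t : ZMod N, F (t, t ^ 2) := by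
  rw [← Finset.sum_subset (Finset.subset_univ (parabola N)) (fun m _ hm => h0 m hm)]
  unfold parabola
  rw [Finset.sum_image]
  intro a _ b _ hab
  exact (Prod.ext_iff.mp hab).1

lemma plancherel (f : ZMod N × ZMod N → ℂ) :
    ∑ x : ZMod N × ZMod N, ‖f x‖ ^ 2
      = ∑ m : ZMod N × ZMod N, ‖dft N f m‖ ^ 2 := by
  have hNR : ((N : ℝ))⁻¹ ^ 2 * ((N : ℝ) ^ 2) = 1 := by
    rw [← mul_pow, inv_mul_cancel₀ (Nat.cast_ne_zero.mpr (NeZero.ne N)), one_pow]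
  have habs : ∀ x : ZMod N × ZMod N, ‖f x‖
      = (N : ℝ)⁻¹ * ‖∑ m : ZMod N × ZMod N,
          dft N f m * ZMod.stdAddChar (x.1 * m.1 + x.2 * m.2)‖ := by
    intro x
    rw [inversion f x, norm_mul, norm_inv, Complex.norm_natCast]
  calc ∑ x : ZMod N × ZMod N, ‖f x‖ ^ 2
      = ∑ x : ZMod N × ZMod N, (N : ℝ)⁻¹ ^ 2 * ‖∑ m : ZMod N × ZMod N,
          dft N f m * ZMod.stdAddChar (x.1 * m.1 + x.2 * m.2)‖ ^ 2 := by
        refine Finset.sum_congr rfl fun x _ => ?_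
        rw [habs x, mul_pow]
    _ = (N : ℝ)⁻¹ ^ 2 * ((N : ℝ) ^ 2 * ∑ m : ZMod N × ZMod N,
          ‖dft N f m‖ ^ 2) := by
        rw [← Finset.mul_sum, parseval_abs]
    _ = ∑ m : ZMod N × ZMod N, ‖dft N f m‖ ^ 2 := by
        rw [← mul_assoc, hNR, one_mul]

section withf

variable (f : ZMod N × ZMod N → ℂ)

lemma sum_sq_eq (hsupp : ∀ m : ZMod N × ZMod N, m ∉ parabola N → dft N f m = 0) :
    ∑ x : ZMod N × ZMod N, ‖f x‖ ^ 2
      = ∑ t : ZMod N, ‖dft N f (t, t ^ 2)‖ ^ 2 := by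
  rw [plancherel f]
  exact sum_para _ fun m hm => by rw [hsupp m hm]; simp

lemma repr_para (hsupp : ∀ m : ZMod N × ZMod N, m ∉ parabola N → dft N f m = 0)
    (x : ZMod N × ZMod N) :
    f x = (N : ℂ)⁻¹ * ∑ t : ZMod N,
      dft N f (t, t ^ 2) * ZMod.stdAddChar (x.1 * t + x.2 * t ^ 2) := by
  rw [inversion f x]
  congr 1
  exact sum_para _ fun m hm => by rw [hsupp m hm, zero_mul]

end withf

/-- the "addition" map on the parabola -/
def sigma2 {N : ℕ} [NeZero N] (p : ZMod N × ZMod N) : ZMod N × ZMod N :=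
  (p.1 + p.2, p.1 ^ 2 + p.2 ^ 2)

noncomputable def hcoef (f : ZMod N × ZMod N → ℂ) (m : ZMod N × ZMod N) : ℂ :=
  ∑ p ∈ Finset.univ.filter (fun p : ZMod N × ZMod N => sigma2 p = m),
    dft N f (p.1, p.1 ^ 2) * dft N f (p.2, p.2 ^ 2)

lemma sq_rep (f : ZMod N × ZMod N → ℂ)
    (hsupp : ∀ m : ZMod N × ZMod N, m ∉ parabola N → dft N f m = 0)
    (x : ZMod N × ZMod N) :
    f x ^ 2 = ((N : ℂ)⁻¹) ^ 2 * ∑ m : ZMod N × ZMod N,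
      hcoef f m * ZMod.stdAddChar (x.1 * m.1 + x.2 * m.2) := by
  rw [repr_para f hsupp x, mul_pow, sq (∑ t : ZMod N, _), Finset.sum_mul_sum]
  congr 1
  have e1 : ∀ t t' : ZMod N,
      (dft N f (t, t ^ 2) * ZMod.stdAddChar (x.1 * t + x.2 * t ^ 2)) *
        (dft N f (t', t' ^ 2) * ZMod.stdAddChar (x.1 * t' + x.2 * t' ^ 2))
      = (dft N f (t, t ^ 2) * dft N f (t', t' ^ 2)) *
          ZMod.stdAddChar (x.1 * (sigma2 (t, t')).1 + x.2 * (sigma2 (t, t')).2) := by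
    intro t t'
    rw [mul_mul_mul_comm, ← AddChar.map_add_eq_mul]
    congr 2
    show x.1 * t + x.2 * t ^ 2 + (x.1 * t' + x.2 * t' ^ 2)
      = x.1 * (t + t') + x.2 * (t ^ 2 + t' ^ 2)
    ring
  rw [Finset.sum_congr rfl fun t _ => Finset.sum_congr rfl fun t' _ => e1 t t']
  refine Eq.trans (Fintype.sum_prod_type (fun p : ZMod N × ZMod N =>
    dft N f (p.1, p.1 ^ 2) * dft N f (p.2, p.2 ^ 2) *
      ZMod.stdAddChar (x.1 * (sigma2 p).1 + x.2 * (sigma2 p).2))).symm ?_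
  rw [← Finset.sum_fiberwise_of_maps_to (g := sigma2)
    (fun p _ => Finset.mem_univ (sigma2 p))]
  refine Finset.sum_congr rfl fun m _ => ?_
  rw [hcoef, Finset.sum_mul]
  refine Finset.sum_congr rfl fun p hp => ?_
  have hpm : sigma2 p = m := (Finset.mem_filter.mp hp).2
  rw [← hpm]

lemma sum_quad_eq (f : ZMod N × ZMod N → ℂ)
    (hsupp : ∀ m : ZMod N × ZMod N, m ∉ parabola N → dft N f m = 0) :
    ∑ x : ZMod N × ZMod N, ‖f x‖ ^ 4
      = ((N : ℝ) ^ 2)⁻¹ * ∑ m : ZMod N × ZMod N, ‖hcoef f m‖ ^ 2 := by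
  have habs : ∀ x : ZMod N × ZMod N, ‖f x‖ ^ 4
      = ((N : ℝ)⁻¹ ^ 2) ^ 2 * ‖∑ m : ZMod N × ZMod N,
          hcoef f m * ZMod.stdAddChar (x.1 * m.1 + x.2 * m.2)‖ ^ 2 := by
    intro x
    have : ‖f x‖ ^ 4 = ‖f x ^ 2‖ ^ 2 := by
      rw [norm_pow]; ring
    rw [this, sq_rep f hsupp x, norm_mul, norm_pow, norm_inv, Complex.norm_natCast, mul_pow]
  rw [Finset.sum_congr rfl fun x _ => habs x, ← Finset.mul_sum, parseval_abs]
  have hNR : (N : ℝ) ≠ 0 := Nat.cast_ne_zero.mpr (NeZero.ne N)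
  field_simp

lemma sum_hcoef_le (f : ZMod N × ZMod N → ℂ) (K : ℕ)
    (hfib : ∀ m : ZMod N × ZMod N,
      (Finset.univ.filter (fun p : ZMod N × ZMod N => sigma2 p = m)).card ≤ K) :
    ∑ m : ZMod N × ZMod N, ‖hcoef f m‖ ^ 2
      ≤ (K : ℝ) * (∑ t : ZMod N, ‖dft N f (t, t ^ 2)‖ ^ 2) ^ 2 := by
  have step : ∀ m : ZMod N × ZMod N, ‖hcoef f m‖ ^ 2
      ≤ (K : ℝ) * ∑ p ∈ Finset.univ.filter (fun p : ZMod N × ZMod N => sigma2 p = m),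
          ‖dft N f (p.1, p.1 ^ 2) * dft N f (p.2, p.2 ^ 2)‖ ^ 2 := by
    intro m
    calc ‖hcoef f m‖ ^ 2
        ≤ (∑ p ∈ Finset.univ.filter (fun p : ZMod N × ZMod N => sigma2 p = m),
            ‖dft N f (p.1, p.1 ^ 2) * dft N f (p.2, p.2 ^ 2)‖) ^ 2 := by
          refine pow_le_pow_left₀ (norm_nonneg _) ?_ 2
          exact norm_sum_le _ _
      _ ≤ ((Finset.univ.filter (fun p : ZMod N × ZMod N => sigma2 p = m)).card : ℝ) *
            ∑ p ∈ Finset.univ.filter (fun p : ZMod N × ZMod N => sigma2 p = m),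
              ‖dft N f (p.1, p.1 ^ 2) * dft N f (p.2, p.2 ^ 2)‖ ^ 2 :=
          sq_sum_le_card_mul_sum_sq
      _ ≤ (K : ℝ) * ∑ p ∈ Finset.univ.filter (fun p : ZMod N × ZMod N => sigma2 p = m),
            ‖dft N f (p.1, p.1 ^ 2) * dft N f (p.2, p.2 ^ 2)‖ ^ 2 := by
          refine mul_le_mul_of_nonneg_right (Nat.cast_le.mpr (hfib m)) ?_
          exact Finset.sum_nonneg fun p _ => by positivity
  calc ∑ m : ZMod N × ZMod N, ‖hcoef f m‖ ^ 2
      ≤ ∑ m : ZMod N × ZMod N, (K : ℝ) *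
          ∑ p ∈ Finset.univ.filter (fun p : ZMod N × ZMod N => sigma2 p = m),
            ‖dft N f (p.1, p.1 ^ 2) * dft N f (p.2, p.2 ^ 2)‖ ^ 2 :=
        Finset.sum_le_sum fun m _ => step m
    _ = (K : ℝ) * ∑ p : ZMod N × ZMod N,
          ‖dft N f (p.1, p.1 ^ 2) * dft N f (p.2, p.2 ^ 2)‖ ^ 2 := by
        rw [← Finset.mul_sum]
        congr 1
        exact Finset.sum_fiberwise_of_maps_to (fun p _ => Finset.mem_univ (sigma2 p)) _
    _ = (K : ℝ) * (∑ t : ZMod N, ‖dft N f (t, t ^ 2)‖ ^ 2) ^ 2 := by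
        congr 1
        have e : ∀ p : ZMod N × ZMod N,
            ‖dft N f (p.1, p.1 ^ 2) * dft N f (p.2, p.2 ^ 2)‖ ^ 2
            = ‖dft N f (p.1, p.1 ^ 2)‖ ^ 2 *
                ‖dft N f (p.2, p.2 ^ 2)‖ ^ 2 := by
          intro p; rw [norm_mul, mul_pow]
        rw [Finset.sum_congr rfl fun p _ => e p, sq, Finset.sum_mul_sum]
        exact Fintype.sum_prod_type _

lemma holder13 {ι : Type*} [Fintype ι] (a : ι → ℝ) (ha : ∀ i, 0 ≤ a i) :
    (∑ i, a i ^ 2) ^ 3 ≤ (∑ i, a i) ^ 2 * ∑ i, a i ^ 4 := by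
  set S1 := ∑ i, a i with hS1
  set S2 := ∑ i, a i ^ 2 with hS2
  set S3 := ∑ i, a i ^ 3 with hS3
  set S4 := ∑ i, a i ^ 4 with hS4
  have hS1n : 0 ≤ S1 := Finset.sum_nonneg fun i _ => ha i
  have hS2n : 0 ≤ S2 := Finset.sum_nonneg fun i _ => by positivity
  have hS4n : 0 ≤ S4 := Finset.sum_nonneg fun i _ => by positivity
  have cs1 : S2 ^ 2 ≤ S1 * S3 := by
    have h := Finset.sum_mul_sq_le_sq_mul_sq Finset.univ
      (fun i => Real.sqrt (a i)) (fun i => Real.sqrt (a i) * a i)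
    have e1 : ∀ i : ι, Real.sqrt (a i) * (Real.sqrt (a i) * a i) = a i ^ 2 := fun i => by
      rw [← mul_assoc, Real.mul_self_sqrt (ha i)]; ring
    have e2 : ∀ i : ι, (Real.sqrt (a i)) ^ 2 = a i := fun i => Real.sq_sqrt (ha i)
    have e3 : ∀ i : ι, (Real.sqrt (a i) * a i) ^ 2 = a i ^ 3 := fun i => by
      rw [mul_pow, Real.sq_sqrt (ha i)]; ring
    rwa [Finset.sum_congr rfl fun i _ => e1 i, Finset.sum_congr rfl fun i _ => e2 i,
      Finset.sum_congr rfl fun i _ => e3 i] at h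
  have cs2 : S3 ^ 2 ≤ S2 * S4 := by
    have h := Finset.sum_mul_sq_le_sq_mul_sq Finset.univ (fun i => a i) (fun i => a i ^ 2)
    have e1 : ∀ i : ι, a i * a i ^ 2 = a i ^ 3 := fun i => by ring
    have e3 : ∀ i : ι, (a i ^ 2) ^ 2 = a i ^ 4 := fun i => by ring
    rwa [Finset.sum_congr rfl fun i _ => e1 i, Finset.sum_congr rfl fun i _ => e3 i] at h
  rcases eq_or_lt_of_le hS2n with h0 | hpos
  · rw [← h0]
    rw [show ((0:ℝ)) ^ 3 = 0 by norm_num]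
    exact mul_nonneg (sq_nonneg S1) hS4n
  · have h4 : S2 ^ 4 ≤ S1 ^ 2 * (S2 * S4) := by
      calc S2 ^ 4 = (S2 ^ 2) ^ 2 := by ring
        _ ≤ (S1 * S3) ^ 2 := pow_le_pow_left₀ (by positivity) cs1 2
        _ = S1 ^ 2 * S3 ^ 2 := by ring
        _ ≤ S1 ^ 2 * (S2 * S4) := mul_le_mul_of_nonneg_left cs2 (sq_nonneg S1)
    have := le_of_mul_le_mul_right (by nlinarith [h4] : S2 ^ 3 * S2 ≤ (S1 ^ 2 * S4) * S2) hpos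
    linarith

lemma rootCount_mul (p m : ℕ) [NeZero p] [NeZero m] [NeZero (p * m)]
    (hco : Nat.Coprime p m) (a b : ZMod (p * m)) :
    ((Finset.univ.filter fun x : ZMod (p * m) => 2 * (x - a) * (x - b) = 0)).card
      = ((Finset.univ.filter fun x : ZMod p =>
            2 * (x - (ZMod.chineseRemainder hco a).1) *
              (x - (ZMod.chineseRemainder hco b).1) = 0)).card
        * ((Finset.univ.filter fun x : ZMod m =>
            2 * (x - (ZMod.chineseRemainder hco a).2) *
              (x - (ZMod.chineseRemainder hco b).2) = 0)).card := by
  set e := ZMod.chineseRemainder hco with he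
  have h2 : e 2 = 2 := by
    rw [show (2 : ZMod (p * m)) = (1 + 1 : ZMod (p * m)) by norm_num, map_add, map_one]
    norm_num
  have hiff : ∀ x : ZMod (p * m),
      (2 * (x - a) * (x - b) = 0) ↔
        (2 * ((e x).1 - (e a).1) * ((e x).1 - (e b).1) = 0 ∧
         2 * ((e x).2 - (e a).2) * ((e x).2 - (e b).2) = 0) := by
    intro x
    have hmap : e (2 * (x - a) * (x - b))
        = (2 * ((e x).1 - (e a).1) * ((e x).1 - (e b).1),
           2 * ((e x).2 - (e a).2) * ((e x).2 - (e b).2)) := by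
      rw [map_mul, map_mul, map_sub, map_sub, h2]
      simp [Prod.ext_iff, Prod.fst_mul, Prod.snd_mul, Prod.fst_sub, Prod.snd_sub]
    constructor
    · intro h
      have : e (2 * (x - a) * (x - b)) = 0 := by rw [h, map_zero]
      rw [hmap] at this
      exact ⟨congrArg Prod.fst this, congrArg Prod.snd this⟩
    · intro ⟨h1', h2'⟩
      apply e.injective
      rw [map_zero, hmap]
      exact Prod.ext h1' h2'
  have hcard := Finset.card_equiv e.toEquiv (s :=
    (Finset.univ.filter fun x : ZMod (p * m) => 2 * (x - a) * (x - b) = 0)) (t :=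
    (Finset.univ.filter fun y : ZMod p × ZMod m =>
      2 * (y.1 - (e a).1) * (y.1 - (e b).1) = 0 ∧
      2 * (y.2 - (e a).2) * (y.2 - (e b).2) = 0))
    (fun x => by
      simp only [Finset.mem_filter, Finset.mem_univ, true_and, RingEquiv.toEquiv_eq_coe,
        EquivLike.coe_coe]
      exact hiff x)
  rw [hcard, ← Finset.univ_product_univ,
    Finset.filter_product (p := fun y : ZMod p => 2 * (y - (e a).1) * (y - (e b).1) = 0)
      (q := fun y : ZMod m => 2 * (y - (e a).2) * (y - (e b).2) = 0),
    Finset.card_product]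

lemma rootCount_prime (q : ℕ) (hq : q.Prime) (a b : ZMod q) :
    haveI : NeZero q := ⟨hq.pos.ne'⟩
    ((Finset.univ.filter fun x : ZMod q => 2 * (x - a) * (x - b) = 0)).card ≤ 2 := by
  haveI : NeZero q := ⟨hq.pos.ne'⟩
  haveI : Fact q.Prime := ⟨hq⟩
  by_cases h2 : (2 : ZMod q) = 0
  · have hq2 : q = 2 := by
      have : q ∣ 2 := by
        have := (ZMod.natCast_eq_zero_iff 2 q).mp (by exact_mod_cast h2)
        exact this
      exact (Nat.prime_dvd_prime_iff_eq hq Nat.prime_two).mp this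
    calc ((Finset.univ.filter fun x : ZMod q => 2 * (x - a) * (x - b) = 0)).card
        ≤ Finset.univ.card := Finset.card_filter_le _ _
      _ = q := by rw [Finset.card_univ, ZMod.card]
      _ = 2 := hq2
  · have hsub : (Finset.univ.filter fun x : ZMod q => 2 * (x - a) * (x - b) = 0)
        ⊆ {a, b} := by
      intro x hx
      have hx' := (Finset.mem_filter.mp hx).2
      rcases mul_eq_zero.mp hx' with h | h
      · rcases mul_eq_zero.mp h with h' | h'
        · exact absurd h' h2
        · have : x = a := by rwa [sub_eq_zero] at h'
          simp [this]
      · have : x = b := by rwa [sub_eq_zero] at h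
        simp [this]
    calc ((Finset.univ.filter fun x : ZMod q => 2 * (x - a) * (x - b) = 0)).card
        ≤ ({a, b} : Finset (ZMod q)).card := Finset.card_le_card hsub
      _ ≤ 2 := Finset.card_insert_le a {b} |>.trans (by simp)

lemma rootCount : ∀ n : ℕ, Squarefree n → ∀ (_ : NeZero n) (a b : ZMod n),
    ((Finset.univ.filter fun x : ZMod n => 2 * (x - a) * (x - b) = 0)).card
      ≤ 2 ^ n.primeFactors.card := by
  intro n
  induction n using Nat.strong_induction_on with
  | _ n ih =>
    intro hsq inst a b
    rcases eq_or_ne n 1 with h1 | h1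
    · subst h1
      refine le_trans (Finset.card_filter_le _ _) ?_
      norm_num [Finset.card_univ, ZMod.card]
    · have hn0 : n ≠ 0 := hsq.ne_zero
      set p := n.minFac with hpdef
      have hp : p.Prime := Nat.minFac_prime h1
      by_cases hm1 : n / p = 1
      · have hnp : n.Prime := by
          have : p = n := by
            have := Nat.mul_div_cancel' n.minFac_dvd
            rw [hm1, mul_one] at this
            exact this
          rwa [← this]
        calc ((Finset.univ.filter fun x : ZMod n => 2 * (x - a) * (x - b) = 0)).card
            ≤ 2 := rootCount_prime n hnp a b
          _ ≤ 2 ^ n.primeFactors.card := by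
              rw [hnp.primeFactors]
              simp
      · -- composite case
        have hex : ∃ p' m' : ℕ, p'.Prime ∧ p'.Coprime m' ∧ m' ≠ 0 ∧ m' ≠ 1 ∧
            m' < n ∧ p' < n ∧ n = p' * m' := by
          have hprod : p * (n / p) = n := Nat.mul_div_cancel' n.minFac_dvd
          have hnp0 : n / p ≠ 0 := by
            intro h0
            apply hn0
            rw [h0, mul_zero] at hprod
            exact hprod.symm
          have h2le : 2 ≤ n / p := by
            rcases Nat.eq_or_lt_of_le (Nat.one_le_iff_ne_zero.mpr hnp0) with h | h
            · exact absurd h.symm hm1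
            · exact h
          refine ⟨p, n / p, hp, ?_, hnp0, hm1, ?_, ?_, hprod.symm⟩
          · rw [hp.coprime_iff_not_dvd]
            intro hdvd
            obtain ⟨k, hk⟩ := hdvd
            have hpp : p * p ∣ n := ⟨k, by rw [← hprod, hk]; ring⟩
            exact hp.one_lt.ne' (Nat.isUnit_iff.mp (hsq p hpp))
          · exact Nat.div_lt_self (Nat.pos_of_ne_zero hn0) hp.one_lt
          · have hmul : p * 2 ≤ p * (n / p) := Nat.mul_le_mul_left p h2le
            have hppos := hp.pos
            omega
        obtain ⟨p', m', hp', hco, hm0, hm1', hmlt, hplt, rfl⟩ := hex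
        haveI : NeZero p' := ⟨hp'.pos.ne'⟩
        haveI : NeZero m' := ⟨hm0⟩
        rw [rootCount_mul p' m' hco a b]
        have b1 := ih p' hplt (hsq.squarefree_of_dvd ⟨m', rfl⟩) ⟨hp'.pos.ne'⟩
          (ZMod.chineseRemainder hco a).1 (ZMod.chineseRemainder hco b).1
        have b2 := ih m' hmlt (hsq.squarefree_of_dvd ⟨p', mul_comm p' m'⟩) ⟨hm0⟩
          (ZMod.chineseRemainder hco a).2 (ZMod.chineseRemainder hco b).2
        calc _ ≤ 2 ^ p'.primeFactors.card * 2 ^ m'.primeFactors.card :=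
              Nat.mul_le_mul b1 b2
          _ = 2 ^ (p' * m').primeFactors.card := by
              rw [← pow_add, hco.primeFactors_mul,
                Finset.card_union_of_disjoint hco.disjoint_primeFactors]

lemma fiber_le (hsq : Squarefree N) (m : ZMod N × ZMod N) :
    (Finset.univ.filter fun p : ZMod N × ZMod N => sigma2 p = m).card
      ≤ 2 ^ N.primeFactors.card := by
  by_cases hne : (Finset.univ.filter fun p : ZMod N × ZMod N => sigma2 p = m).Nonempty
  · obtain ⟨q, hq⟩ := hne
    have hmem : sigma2 q = m := (Finset.mem_filter.mp hq).2
    set a := q.1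
    set b := q.2
    have hm1 : a + b = m.1 := congrArg Prod.fst hmem
    have hm2 : a ^ 2 + b ^ 2 = m.2 := congrArg Prod.snd hmem
    refine le_trans (Finset.card_le_card_of_injOn (fun p => p.1) ?_ ?_)
      (rootCount N hsq ‹NeZero N› a b)
    · intro p hp
      simp only [Finset.coe_filter, Set.mem_setOf_eq, Finset.mem_filter, Finset.mem_univ, true_and] at hp ⊢
      have h1 : p.1 + p.2 = a + b := (congrArg Prod.fst hp).trans hm1.symm
      have h2 : p.1 ^ 2 + p.2 ^ 2 = a ^ 2 + b ^ 2 := (congrArg Prod.snd hp).trans hm2.symm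
      linear_combination h2 + (p.1 - p.2 - a - b) * h1
    · intro p hp p' hp' hpp
      simp only [Finset.coe_filter, Set.mem_setOf_eq] at hp hp'
      have e1 : p.1 + p.2 = m.1 := congrArg Prod.fst hp.2
      have e2 : p'.1 + p'.2 = m.1 := congrArg Prod.fst hp'.2
      have : p.2 = p'.2 := by
        have : (p.1 : ZMod N) = p'.1 := hpp
        rw [this] at e1
        exact add_left_cancel (e1.trans e2.symm)
      exact Prod.ext hpp this
  · rw [Finset.not_nonempty_iff_eq_empty.mp hne]
    simp

lemma omega_bound (δ : ℝ) (hδ : 0 < δ) : ∃ C : ℝ, 0 < C ∧ ∀ n : ℕ, n ≠ 0 →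
    (2 : ℝ) ^ n.primeFactors.card ≤ C * (n : ℝ) ^ δ := by
  set T : ℕ := ⌈(2 : ℝ) ^ (1 / δ)⌉₊ with hT
  refine ⟨2 ^ T, by positivity, ?_⟩
  intro n hn
  set S := n.primeFactors with hS
  have split : (2 : ℝ) ^ S.card
      = (∏ _p ∈ S.filter (· < T), (2 : ℝ)) * ∏ _p ∈ S.filter (¬ · < T), (2 : ℝ) := by
    rw [Finset.prod_filter_mul_prod_filter_not, Finset.prod_const]
  have h1 : (∏ _p ∈ S.filter (· < T), (2 : ℝ)) ≤ 2 ^ T := by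
    rw [Finset.prod_const]
    have hsub : S.filter (· < T) ⊆ Finset.range T := fun p hp =>
      Finset.mem_range.mpr (Finset.mem_filter.mp hp).2
    have hcard : (S.filter (· < T)).card ≤ T :=
      le_trans (Finset.card_le_card hsub) (le_of_eq (Finset.card_range T))
    exact pow_le_pow_right₀ one_le_two hcard
  have h2 : (∏ _p ∈ S.filter (¬ · < T), (2 : ℝ))
      ≤ ∏ p ∈ S.filter (¬ · < T), (p : ℝ) ^ δ := by
    refine Finset.prod_le_prod (fun _ _ => by norm_num) ?_
    intro p hp
    have hpT : T ≤ p := le_of_not_gt (Finset.mem_filter.mp hp).2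
    have hle : (2 : ℝ) ^ (1 / δ) ≤ (p : ℝ) :=
      le_trans (Nat.le_ceil _) (by exact_mod_cast hpT)
    calc (2 : ℝ) = ((2 : ℝ) ^ (1 / δ)) ^ δ := by
          rw [← Real.rpow_mul (by norm_num), one_div_mul_cancel hδ.ne', Real.rpow_one]
      _ ≤ (p : ℝ) ^ δ := Real.rpow_le_rpow (by positivity) hle hδ.le
  have h3 : (∏ p ∈ S.filter (¬ · < T), (p : ℝ) ^ δ)
      = ((∏ p ∈ S.filter (¬ · < T), p : ℕ) : ℝ) ^ δ := by
    rw [Real.finset_prod_rpow _ _ (fun p _ => by positivity) δ]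
    norm_num
  have h4 : (∏ p ∈ S.filter (¬ · < T), p) ≤ n := by
    apply Nat.le_of_dvd (Nat.pos_of_ne_zero hn)
    exact dvd_trans (Finset.prod_dvd_prod_of_subset _ _ _ (Finset.filter_subset _ _))
      (Nat.prod_primeFactors_dvd n)
  have h5 : ((∏ p ∈ S.filter (¬ · < T), p : ℕ) : ℝ) ^ δ ≤ (n : ℝ) ^ δ :=
    Real.rpow_le_rpow (by positivity) (by exact_mod_cast h4) hδ.le
  calc (2 : ℝ) ^ S.card
      = (∏ _p ∈ S.filter (· < T), (2 : ℝ)) * ∏ _p ∈ S.filter (¬ · < T), (2 : ℝ) := split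
    _ ≤ (2 ^ T) * ((n : ℝ) ^ δ) := by
        refine mul_le_mul h1 (le_trans h2 (le_trans (le_of_eq h3) h5)) ?_ (by positivity)
        exact Finset.prod_nonneg fun _ _ => by norm_num

theorem l2_l1_parabola (ε : ℝ) (hε : 0 < ε) :
    ∃ C : ℝ, 0 < C ∧ ∀ (N : ℕ) [NeZero N], Squarefree N →
      ∀ f : ZMod N × ZMod N → ℂ,
        (∀ m : ZMod N × ZMod N, m ∉ parabola N → dft N f m = 0) →
        (((N : ℝ) ^ 2)⁻¹ *
            ∑ x : ZMod N × ZMod N, ‖f x‖ ^ 2) ^ ((1 : ℝ) / 2) ≤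
          (C * (N : ℝ) ^ ε) ^ 2 * (((N : ℝ) ^ 2)⁻¹ *
            ∑ x : ZMod N × ZMod N, ‖f x‖) := by
  obtain ⟨C₀, hC₀, hbound⟩ := omega_bound ε hε
  refine ⟨max 1 C₀, lt_of_lt_of_le one_pos (le_max_left _ _), ?_⟩
  intro N instN hsq f hsupp
  set C : ℝ := max 1 C₀ with hCdef
  have hC1 : (1 : ℝ) ≤ C := le_max_left _ _
  have hNne : (N : ℝ) ≠ 0 := Nat.cast_ne_zero.mpr (NeZero.ne N)
  have hN1 : (1 : ℝ) ≤ (N : ℝ) := by exact_mod_cast Nat.one_le_iff_ne_zero.mpr (NeZero.ne N)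
  set SA := ∑ x : ZMod N × ZMod N, ‖f x‖ with hSAdef
  set SB := ∑ x : ZMod N × ZMod N, ‖f x‖ ^ 2 with hSBdef
  have hSAnn : 0 ≤ SA := Finset.sum_nonneg fun x _ => norm_nonneg _
  have hSBnn : 0 ≤ SB := Finset.sum_nonneg fun x _ => by positivity
  set K : ℝ := (2 : ℝ) ^ N.primeFactors.card with hKdef
  have hKnn : (0 : ℝ) ≤ K := by positivity
  have hfib := fiber_le (N := N) hsq
  have hquad : ∑ x : ZMod N × ZMod N, ‖f x‖ ^ 4
      ≤ ((N : ℝ) ^ 2)⁻¹ * (K * SB ^ 2) := by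
    rw [sum_quad_eq f hsupp]
    have hh := sum_hcoef_le f (2 ^ N.primeFactors.card) hfib
    have hcast : ((2 ^ N.primeFactors.card : ℕ) : ℝ) = K := by push_cast; rfl
    rw [hcast] at hh
    have hg : (∑ t : ZMod N, ‖dft N f (t, t ^ 2)‖ ^ 2) = SB := by
      rw [hSBdef]
      exact (sum_sq_eq f hsupp).symm
    rw [hg] at hh
    exact mul_le_mul_of_nonneg_left hh (by positivity)
  have hhold' : SB ^ 3 ≤ SA ^ 2 * ∑ x : ZMod N × ZMod N, ‖f x‖ ^ 4 :=
    holder13 (fun x => ‖f x‖) (fun x => norm_nonneg _)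
  have key : SB ≤ ((N : ℝ) ^ 2)⁻¹ * K * SA ^ 2 := by
    rcases eq_or_lt_of_le hSBnn with h0 | hpos
    · rw [← h0]
      positivity
    · have step : SB ^ 3 ≤ (((N : ℝ) ^ 2)⁻¹ * K * SA ^ 2) * SB ^ 2 := by
        calc SB ^ 3 ≤ SA ^ 2 * (((N : ℝ) ^ 2)⁻¹ * (K * SB ^ 2)) :=
              le_trans hhold' (mul_le_mul_of_nonneg_left hquad (sq_nonneg SA))
          _ = (((N : ℝ) ^ 2)⁻¹ * K * SA ^ 2) * SB ^ 2 := by ring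
      exact le_of_mul_le_mul_right
        (by calc SB * SB ^ 2 = SB ^ 3 := by ring
              _ ≤ _ := step)
        (by positivity : (0 : ℝ) < SB ^ 2)
  rw [← Real.sqrt_eq_rpow]
  have hrhs : 0 ≤ ((N : ℝ) ^ 2)⁻¹ * SA := by positivity
  have hchain : Real.sqrt (((N : ℝ) ^ 2)⁻¹ * SB)
      ≤ Real.sqrt K * (((N : ℝ) ^ 2)⁻¹ * SA) := by
    have h1 : ((N : ℝ) ^ 2)⁻¹ * SB ≤ K * (((N : ℝ) ^ 2)⁻¹ * SA) ^ 2 := by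
      calc ((N : ℝ) ^ 2)⁻¹ * SB
          ≤ ((N : ℝ) ^ 2)⁻¹ * (((N : ℝ) ^ 2)⁻¹ * K * SA ^ 2) :=
            mul_le_mul_of_nonneg_left key (by positivity)
        _ = K * (((N : ℝ) ^ 2)⁻¹ * SA) ^ 2 := by ring
    calc Real.sqrt (((N : ℝ) ^ 2)⁻¹ * SB)
        ≤ Real.sqrt (K * (((N : ℝ) ^ 2)⁻¹ * SA) ^ 2) := Real.sqrt_le_sqrt h1
      _ = Real.sqrt K * Real.sqrt ((((N : ℝ) ^ 2)⁻¹ * SA) ^ 2) := Real.sqrt_mul hKnn _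
      _ = Real.sqrt K * (((N : ℝ) ^ 2)⁻¹ * SA) := by rw [Real.sqrt_sq hrhs]
  refine le_trans hchain (mul_le_mul_of_nonneg_right ?_ hrhs)
  have hKC : K ≤ C₀ * (N : ℝ) ^ ε := hbound N (NeZero.ne N)
  have hNεnn : 0 ≤ (N : ℝ) ^ ε := Real.rpow_nonneg (by positivity) ε
  have hNε1 : 1 ≤ (N : ℝ) ^ ε := Real.one_le_rpow hN1 hε.le
  have hsC : Real.sqrt C₀ ≤ C ^ 2 := by
    have h4 : C₀ ≤ (C ^ 2) ^ 2 := by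
      calc C₀ ≤ C := le_max_right _ _
        _ ≤ C ^ 4 := le_self_pow₀ hC1 (by norm_num)
        _ = (C ^ 2) ^ 2 := by ring
    calc Real.sqrt C₀ ≤ Real.sqrt ((C ^ 2) ^ 2) := Real.sqrt_le_sqrt h4
      _ = C ^ 2 := Real.sqrt_sq (by positivity)
  have hsN : Real.sqrt ((N : ℝ) ^ ε) ≤ (N : ℝ) ^ ε * (N : ℝ) ^ ε := by
    have hself : Real.sqrt ((N : ℝ) ^ ε) ≤ (N : ℝ) ^ ε := by
      calc Real.sqrt ((N : ℝ) ^ ε)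
          ≤ Real.sqrt (((N : ℝ) ^ ε) ^ 2) :=
            Real.sqrt_le_sqrt (le_self_pow₀ hNε1 (by norm_num))
        _ = (N : ℝ) ^ ε := Real.sqrt_sq hNεnn
    exact le_trans hself (le_mul_of_one_le_left hNεnn hNε1)
  calc Real.sqrt K ≤ Real.sqrt (C₀ * (N : ℝ) ^ ε) := Real.sqrt_le_sqrt hKC
    _ = Real.sqrt C₀ * Real.sqrt ((N : ℝ) ^ ε) := Real.sqrt_mul hC₀.le _
    _ ≤ C ^ 2 * ((N : ℝ) ^ ε * (N : ℝ) ^ ε) :=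
        mul_le_mul hsC hsN (Real.sqrt_nonneg _) (by positivity)
    _ = (C * (N : ℝ) ^ ε) ^ 2 := by ring
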